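/- Let τ ∈ ℝ and let A : ℝ → ℝ be a twice differentiable function satisfying the Airy equation A''(x) = x·A(x) for all x. Define K(z,w) := (A(z)A'(w) − A'(z)A(w))/(z−w) for z ≠ w. Then for all z ≠ w, ∂/∂z[ (τ−z)·∂K/∂z(z,w) ] − z(τ−z)·K(z,w) = ∂/∂w[ (τ−w)·∂K/∂w(z,w) ] − w(τ−w)·K(z,w). -/

import Mathlib

/-- Kernel symmetry `L_z K = L_w K` underlying the Tracy–Widom Airy-kernel commutation:
for any twice differentiable solution `A` of the Airy equation `A'' = xA`, the kernel
`K(z,w) = (A(z)A'(w) − A'(z)A(w))/(z−w)` satisfies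
`∂_z[(τ−z)∂_z K] − z(τ−z)K = ∂_w[(τ−w)∂_w K] − w(τ−w)K` off the diagonal. -/
theorem airy_kernel_symmetry (τ : ℝ) (A : ℝ → ℝ)
    (hA : Differentiable ℝ A) (hA' : Differentiable ℝ (deriv A))
    (hode : ∀ x : ℝ, deriv (deriv A) x = x * A x) :
    let K : ℝ → ℝ → ℝ := fun z w => (A z * deriv A w - deriv A z * A w) / (z - w)
    ∀ z w : ℝ, z ≠ w →
      deriv (fun z' => (τ - z') * deriv (fun z'' => K z'' w) z') z -
          z * (τ - z) * K z w =
        deriv (fun w' => (τ - w') * deriv (fun w'' => K z w'') w') w -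
          w * (τ - w) * K z w := by
  intro K z w hzw
  have hs : z - w ≠ 0 := sub_ne_zero.mpr hzw
  -- derivative of K in first variable
  have hKz : ∀ z' : ℝ, z' ≠ w → HasDerivAt (fun z'' => K z'' w)
      (((deriv A z' * deriv A w - z' * A z' * A w) * (z' - w)
        - (A z' * deriv A w - deriv A z' * A w)) / (z' - w) ^ 2) z' := by
    intro z' h
    have h0 : z' - w ≠ 0 := sub_ne_zero.mpr h
    have hN : HasDerivAt (fun z'' => A z'' * deriv A w - deriv A z'' * A w)
        (deriv A z' * deriv A w - z' * A z' * A w) z' := by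
      have := ((hA z').hasDerivAt.mul_const (deriv A w)).sub
        ((hA' z').hasDerivAt.mul_const (A w))
      rwa [hode] at this
    have hD : HasDerivAt (fun z'' : ℝ => z'' - w) 1 z' := (hasDerivAt_id z').sub_const w
    have := hN.div hD h0
    refine this.congr_deriv ?_
    ring
  -- derivative of K in second variable
  have hKw : ∀ w' : ℝ, z ≠ w' → HasDerivAt (fun w'' => K z w'')
      (((A z * (w' * A w') - deriv A z * deriv A w') * (z - w')
        + (A z * deriv A w' - deriv A z * A w')) / (z - w') ^ 2) w' := by
    intro w' h
    have h0 : z - w' ≠ 0 := sub_ne_zero.mpr h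
    have hN : HasDerivAt (fun w'' => A z * deriv A w'' - deriv A z * A w'')
        (A z * (w' * A w') - deriv A z * deriv A w') w' := by
      have := (((hA' w').hasDerivAt.const_mul (A z))).sub
        (((hA w').hasDerivAt.const_mul (deriv A z)))
      rwa [hode] at this
    have hD : HasDerivAt (fun w'' : ℝ => z - w'') (-1) w' := by
      simpa using (hasDerivAt_id w').const_sub z
    have := hN.div hD h0
    refine this.congr_deriv ?_
    field_simp
    ring
  -- rewrite outer derivative on the z side
  set a := A z with ha; set b := deriv A z with hb
  set c := A w with hc; set d := deriv A w with hd
  have hLz : deriv (fun z' => (τ - z') * deriv (fun z'' => K z'' w) z') z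
      = (-1) * (((b * d - z * a * c) * (z - w) - (a * d - b * c)) / (z - w) ^ 2)
      + (τ - z) * (((z * a * d - (a + z * b) * c) * (z - w) * (z - w) ^ 2
          - ((b * d - z * a * c) * (z - w) - (a * d - b * c)) * (2 * (z - w)))
          / ((z - w) ^ 2) ^ 2) := by
    have hev : (fun z' => (τ - z') * deriv (fun z'' => K z'' w) z')
        =ᶠ[nhds z] (fun z' => (τ - z') *
          (((deriv A z' * d - z' * A z' * c) * (z' - w)
            - (A z' * d - deriv A z' * c)) / (z' - w) ^ 2)) := by
      filter_upwards [isOpen_ne.mem_nhds hzw] with z' h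
      rw [(hKz z' h).deriv]
    rw [hev.deriv_eq]
    have hP : HasDerivAt (fun z' => (deriv A z' * d - z' * A z' * c) * (z' - w)
        - (A z' * d - deriv A z' * c))
        ((z * a * d - (a + z * b) * c) * (z - w)) z := by
      have h1 : HasDerivAt (fun z' => deriv A z' * d - z' * A z' * c)
          (z * a * d - (a + z * b) * c) z := by
        have := ((hA' z).hasDerivAt.mul_const d).sub
          (((hasDerivAt_id z).mul ((hA z).hasDerivAt)).mul_const c)
        rw [hode] at this
        refine this.congr_deriv ?_
        simp only [id_eq]
        ring
      have h2 : HasDerivAt (fun z' : ℝ => z' - w) 1 z := (hasDerivAt_id z).sub_const w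
      have h3 : HasDerivAt (fun z' => A z' * d - deriv A z' * c)
          (b * d - z * a * c) z := by
        have := ((hA z).hasDerivAt.mul_const d).sub ((hA' z).hasDerivAt.mul_const c)
        rwa [hode] at this
      have := ((h1.mul h2).sub h3)
      refine this.congr_deriv ?_
      ring
    have hQ : HasDerivAt (fun z' : ℝ => (z' - w) ^ 2) (2 * (z - w)) z := by
      have := ((hasDerivAt_id z).sub_const w).pow 2
      refine this.congr_deriv ?_
      simp only [id_eq]
      ring
    have hF : HasDerivAt (fun z' => ((deriv A z' * d - z' * A z' * c) * (z' - w)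
        - (A z' * d - deriv A z' * c)) / (z' - w) ^ 2)
        (((z * a * d - (a + z * b) * c) * (z - w) * (z - w) ^ 2
          - ((b * d - z * a * c) * (z - w) - (a * d - b * c)) * (2 * (z - w)))
          / ((z - w) ^ 2) ^ 2) z := hP.div hQ (pow_ne_zero 2 hs)
    have hG : HasDerivAt (fun z' : ℝ => τ - z') (-1) z := by
      simpa using (hasDerivAt_id z).const_sub τ
    exact (hG.mul hF).deriv
  have hLw : deriv (fun w' => (τ - w') * deriv (fun w'' => K z w'') w') w
      = (-1) * (((a * (w * c) - b * d) * (z - w) + (a * d - b * c)) / (z - w) ^ 2)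
      + (τ - w) * (((a * (c + w * d) - b * (w * c)) * (z - w) * (z - w) ^ 2
          - ((a * (w * c) - b * d) * (z - w) + (a * d - b * c)) * (-(2 * (z - w))))
          / ((z - w) ^ 2) ^ 2) := by
    have hev : (fun w' => (τ - w') * deriv (fun w'' => K z w'') w')
        =ᶠ[nhds w] (fun w' => (τ - w') *
          (((a * (w' * A w') - b * deriv A w') * (z - w')
            + (a * deriv A w' - b * A w')) / (z - w') ^ 2)) := by
      filter_upwards [isOpen_ne.mem_nhds (Ne.symm hzw : w ≠ z)] with w' h
      rw [(hKw w' (Ne.symm h)).deriv]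
    rw [hev.deriv_eq]
    have hP : HasDerivAt (fun w' => (a * (w' * A w') - b * deriv A w') * (z - w')
        + (a * deriv A w' - b * A w'))
        ((a * (c + w * d) - b * (w * c)) * (z - w)) w := by
      have h1 : HasDerivAt (fun w' => a * (w' * A w') - b * deriv A w')
          (a * (c + w * d) - b * (w * c)) w := by
        have := (((hasDerivAt_id w).mul ((hA w).hasDerivAt)).const_mul a).sub
          (((hA' w).hasDerivAt).const_mul b)
        rw [hode] at this
        refine this.congr_deriv ?_
        simp only [id_eq]
        ring
      have h2 : HasDerivAt (fun w' : ℝ => z - w') (-1) w := by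
        simpa using (hasDerivAt_id w).const_sub z
      have h3 : HasDerivAt (fun w' => a * deriv A w' - b * A w')
          (a * (w * c) - b * d) w := by
        have := (((hA' w).hasDerivAt).const_mul a).sub (((hA w).hasDerivAt).const_mul b)
        rwa [hode] at this
      have := ((h1.mul h2).add h3)
      refine this.congr_deriv ?_
      ring
    have hQ : HasDerivAt (fun w' : ℝ => (z - w') ^ 2) (-(2 * (z - w))) w := by
      have h2 : HasDerivAt (fun w' : ℝ => z - w') (-1) w := by
        simpa using (hasDerivAt_id w).const_sub z
      have := h2.pow 2
      refine this.congr_deriv ?_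
      ring
    have hF := hP.div hQ (pow_ne_zero 2 hs)
    have hG : HasDerivAt (fun w' : ℝ => τ - w') (-1) w := by
      simpa using (hasDerivAt_id w).const_sub τ
    exact (hG.mul hF).deriv
  rw [hLz, hLw]
  show _ - z * (τ - z) * ((a * d - b * c) / (z - w)) = _ - w * (τ - w) * ((a * d - b * c) / (z - w))
  field_simp
  ring
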